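/- Let π_ε = (1−ε)π_0 + (ε/L)1_{L×K} for ε ∈ [0,1], with π_0 as the greedy 0-1 block policy with largest cluster size K_1. Then σ_min(I_K − c π_ε^T π_ε) ≥ 1 − c K_1 + c ε(2−ε)(K_1 − K/L), for any c > 0, where the bound is derived via Weyl's inequality from the decomposition I_K − c π_ε^T π_ε = I_K − c(1−ε)² π_0^T π_0 − (c ε(2−ε)/L) 1_{K×K}. -/

import Mathlib

open scoped BigOperators
open Matrix

private lemma fiber_sq_bound {K L : ℕ} (r : Fin K → Fin L) (x : Fin K → ℝ) :
    ∑ l : Fin L, (∑ k ∈ Finset.univ.filter (fun k => r k = l), x k) ^ 2 ≤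
      ((Finset.univ.sup fun l : Fin L =>
          (Finset.univ.filter fun k : Fin K => r k = l).card : ℕ) : ℝ) * ∑ k, (x k) ^ 2 := by
  set K1 : ℕ := Finset.univ.sup fun l : Fin L =>
      (Finset.univ.filter fun k : Fin K => r k = l).card with hK1
  calc ∑ l : Fin L, (∑ k ∈ Finset.univ.filter (fun k => r k = l), x k) ^ 2
      ≤ ∑ l : Fin L, (K1 : ℝ) * ∑ k ∈ Finset.univ.filter (fun k => r k = l), (x k) ^ 2 := by
        refine Finset.sum_le_sum fun l _ => ?_
        have h1 : (∑ k ∈ Finset.univ.filter (fun k => r k = l), x k) ^ 2 ≤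
            ((Finset.univ.filter (fun k => r k = l)).card : ℝ) *
              ∑ k ∈ Finset.univ.filter (fun k => r k = l), (x k) ^ 2 := by
          exact_mod_cast sq_sum_le_card_mul_sum_sq
            (s := Finset.univ.filter (fun k => r k = l)) (f := x)
        refine h1.trans ?_
        have h2 : ((Finset.univ.filter (fun k => r k = l)).card : ℝ) ≤ (K1 : ℝ) := by
          exact_mod_cast Finset.le_sup (f := fun l : Fin L =>
            (Finset.univ.filter fun k : Fin K => r k = l).card) (Finset.mem_univ l)
        have h3 : (0:ℝ) ≤ ∑ k ∈ Finset.univ.filter (fun k => r k = l), (x k) ^ 2 :=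
          Finset.sum_nonneg fun k _ => sq_nonneg _
        exact mul_le_mul_of_nonneg_right h2 h3
    _ = (K1 : ℝ) * ∑ k, (x k) ^ 2 := by
        rw [← Finset.mul_sum,
          Finset.sum_fiberwise_of_maps_to (fun k _ => Finset.mem_univ (r k))]

set_option maxHeartbeats 1000000 in
/-- Weyl-type lower bound on the smallest eigenvalue of `I − c π_εᵀπ_ε` for the
ε-greedy mixture `π_ε = (1−ε)π₀ + (ε/L)1_{L×K}`. -/
theorem stmt_11 (K L : ℕ) (hL : 0 < L) (r : Fin K → Fin L)
    (c ε : ℝ) (hc : 0 < c) (hε : ε ∈ Set.Icc (0 : ℝ) 1) :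
    ∀ μ : ℝ, μ ∈ spectrum ℝ
      ((1 : Matrix (Fin K) (Fin K) ℝ) -
        c • ((((1 - ε) • (Matrix.of fun (l : Fin L) (k : Fin K) =>
            if r k = l then (1 : ℝ) else 0) +
          (ε / L) • (Matrix.of fun (_ : Fin L) (_ : Fin K) => (1 : ℝ))))ᵀ *
          ((1 - ε) • (Matrix.of fun (l : Fin L) (k : Fin K) =>
            if r k = l then (1 : ℝ) else 0) +
          (ε / L) • (Matrix.of fun (_ : Fin L) (_ : Fin K) => (1 : ℝ))))) →
      1 - c * ((Finset.univ.sup fun l : Fin L =>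
          (Finset.univ.filter fun k : Fin K => r k = l).card : ℕ) : ℝ)
        + c * ε * (2 - ε) *
          (((Finset.univ.sup fun l : Fin L =>
            (Finset.univ.filter fun k : Fin K => r k = l).card : ℕ) : ℝ) -
            (K : ℝ) / (L : ℝ)) ≤ μ := by
  intro μ hμ
  by_contra hlt
  push_neg at hlt
  set π : Matrix (Fin L) (Fin K) ℝ :=
    (1 - ε) • (Matrix.of fun (l : Fin L) (k : Fin K) =>
            if r k = l then (1 : ℝ) else 0) +
          (ε / L) • (Matrix.of fun (_ : Fin L) (_ : Fin K) => (1 : ℝ)) with hπ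
  set K1 : ℝ := ((Finset.univ.sup fun l : Fin L =>
      (Finset.univ.filter fun k : Fin K => r k = l).card : ℕ) : ℝ) with hK1
  set b : ℝ := 1 - c * K1 + c * ε * (2 - ε) * (K1 - (K : ℝ) / (L : ℝ)) with hb
  set M : Matrix (Fin K) (Fin K) ℝ := (1 : Matrix (Fin K) (Fin K) ℝ) - c • (πᵀ * π) with hM
  rw [spectrum.mem_iff] at hμ
  apply hμ
  -- show `μ • 1 - M` is a unit, via posdefness of `M - μ • 1`
  have hε0 : 0 ≤ ε := hε.1
  have hε1 : ε ≤ 1 := hε.2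
  have hLpos : (0:ℝ) < (L:ℝ) := by exact_mod_cast hL
  -- quadratic form computation
  have key : ∀ x : Fin K → ℝ, x ≠ 0 → 0 < x ⬝ᵥ ((M - μ • 1) *ᵥ x) := by
    intro x hx
    have hmv : ∀ l : Fin L, (π *ᵥ x) l =
        (1 - ε) * (∑ k ∈ Finset.univ.filter (fun k => r k = l), x k) +
          (ε / L) * ∑ k, x k := by
      intro l
      simp only [hπ, mulVec, dotProduct, Matrix.add_apply, Matrix.smul_apply,
        Matrix.of_apply, smul_eq_mul]
      rw [Finset.sum_congr rfl (fun k _ => by split <;> ring :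
        ∀ k ∈ Finset.univ, ((1 - ε) * (if r k = l then (1:ℝ) else 0) + ε / L * 1) * x k
          = (1 - ε) * (if r k = l then x k else 0) + ε / L * x k)]
      rw [Finset.sum_add_distrib, ← Finset.mul_sum, ← Finset.mul_sum, ← Finset.sum_filter]
    have hquad : x ⬝ᵥ ((πᵀ * π) *ᵥ x) = ∑ l : Fin L, ((π *ᵥ x) l) ^ 2 := by
      rw [← mulVec_mulVec, dotProduct_mulVec, vecMul_transpose]
      simp [dotProduct, sq]
    -- abbreviations
    set T : ℝ := ∑ k, (x k) ^ 2 with hT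
    set S : ℝ := ∑ k, x k with hS
    have hsum_fib : ∑ l : Fin L, (∑ k ∈ Finset.univ.filter (fun k => r k = l), x k) = S := by
      rw [hS, Finset.sum_fiberwise_of_maps_to (fun k _ => Finset.mem_univ (r k))]
    have hQ : x ⬝ᵥ ((πᵀ * π) *ᵥ x) =
        (1 - ε) ^ 2 * (∑ l : Fin L, (∑ k ∈ Finset.univ.filter (fun k => r k = l), x k) ^ 2)
          + (ε * (2 - ε) / L) * S ^ 2 := by
      rw [hquad]
      have : ∀ l : Fin L, ((π *ᵥ x) l) ^ 2 =
          (1 - ε) ^ 2 * (∑ k ∈ Finset.univ.filter (fun k => r k = l), x k) ^ 2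
            + 2 * (1 - ε) * (ε / L) * S * (∑ k ∈ Finset.univ.filter (fun k => r k = l), x k)
            + (ε / L) ^ 2 * S ^ 2 := by
        intro l; rw [hmv l]; ring
      rw [Finset.sum_congr rfl fun l _ => this l]
      rw [Finset.sum_add_distrib, Finset.sum_add_distrib, ← Finset.mul_sum, ← Finset.mul_sum,
        hsum_fib, Finset.sum_const, Finset.card_univ, Fintype.card_fin, nsmul_eq_mul]
      field_simp
      ring
    -- bounds
    have hTpos : 0 < T := by
      rw [hT]
      have hne : ∃ k, x k ≠ 0 := by
        by_contra h; push_neg at h; exact hx (funext h)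
      obtain ⟨k, hk⟩ := hne
      refine Finset.sum_pos' (fun i _ => sq_nonneg _) ⟨k, Finset.mem_univ k, ?_⟩
      positivity
    have hfib := fiber_sq_bound r x
    have hSsq : S ^ 2 ≤ (K : ℝ) * T := by
      rw [hS, hT]
      have := sq_sum_le_card_mul_sum_sq (s := (Finset.univ : Finset (Fin K))) (f := x)
      simpa using this
    have hQle : x ⬝ᵥ ((πᵀ * π) *ᵥ x) ≤
        ((1 - ε) ^ 2 * K1 + ε * (2 - ε) / L * (K : ℝ)) * T := by
      rw [hQ]
      have h1 : (1 - ε) ^ 2 * (∑ l : Fin L,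
          (∑ k ∈ Finset.univ.filter (fun k => r k = l), x k) ^ 2) ≤ (1 - ε) ^ 2 * (K1 * T) :=
        mul_le_mul_of_nonneg_left hfib (sq_nonneg _)
      have hcoef : 0 ≤ ε * (2 - ε) / L := by
        apply div_nonneg _ hLpos.le
        apply mul_nonneg hε0; linarith
      have h2 : (ε * (2 - ε) / L) * S ^ 2 ≤ (ε * (2 - ε) / L) * ((K : ℝ) * T) :=
        mul_le_mul_of_nonneg_left hSsq hcoef
      nlinarith [h1, h2]
    -- final inequality
    have hform : x ⬝ᵥ ((M - μ • 1) *ᵥ x) = T - c * (x ⬝ᵥ ((πᵀ * π) *ᵥ x)) - μ * T := by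
      rw [hM]
      simp only [sub_mulVec, smul_mulVec, one_mulVec, dotProduct_sub, dotProduct_smul,
        smul_eq_mul]
      have hxx : x ⬝ᵥ x = T := by rw [hT]; simp [dotProduct, sq]
      rw [hxx]
    rw [hform]
    have hble : b * T ≤ T - c * (x ⬝ᵥ ((πᵀ * π) *ᵥ x)) := by
      have : c * (x ⬝ᵥ ((πᵀ * π) *ᵥ x)) ≤ c * (((1 - ε) ^ 2 * K1 + ε * (2 - ε) / L * (K : ℝ)) * T) :=
        mul_le_mul_of_nonneg_left hQle hc.le
      have hbid : b = 1 - c * ((1 - ε) ^ 2 * K1 + ε * (2 - ε) / L * (K : ℝ)) := by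
        rw [hb]; field_simp; ring
      rw [hbid]; nlinarith [this]
    have := mul_lt_mul_of_pos_right hlt hTpos
    linarith
  have hherm : (M - μ • 1).IsHermitian := by
    have h1 : (πᵀ * π).IsHermitian := by
      have := isHermitian_conjTranspose_mul_self π
      rwa [conjTranspose_eq_transpose_of_trivial] at this
    have h2 : (c • (πᵀ * π)).IsHermitian := by
      unfold Matrix.IsHermitian at h1 ⊢
      rw [conjTranspose_smul, h1]
      norm_num
    have h3 : (μ • (1 : Matrix (Fin K) (Fin K) ℝ)).IsHermitian := by
      unfold Matrix.IsHermitian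
      rw [conjTranspose_smul, isHermitian_one.eq]
      norm_num
    exact (isHermitian_one.sub h2).sub h3
  have hpd : (M - μ • 1).PosDef := by
    refine posDef_iff_dotProduct_mulVec.mpr ⟨hherm, fun x hx => ?_⟩
    have := key x hx
    simpa using this
  have : IsUnit (M - μ • 1) := hpd.isUnit
  have halg : algebraMap ℝ (Matrix (Fin K) (Fin K) ℝ) μ - M = -(M - μ • 1) := by
    rw [Algebra.algebraMap_eq_smul_one, neg_sub]
  rw [halg]
  exact this.neg
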